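/- For all a ∈ c₀₀ and all integers n ≥ 0, ‖a‖_{T̈} ≤ Σ_{i=0}^n ρ′_i(a)/2^i + 2^{-(n+1)} sup{ Σ_{i=1}^j ‖E_i a‖_{T̈} : {E₁, …, E_j} is 𝓖′_{n+1}-admissible }, where ρ′_i = ‖·‖_{𝓕′_i}. -/

import Mathlib

open Ordinal Filter Topology

namespace LTIndex

/-- `E < F` for finite sets: `max E < min F` (with `max ∅ = 0`, `min ∅ = ∞`),
equivalently every element of `E` is less than every element of `F`. -/
def finLT (E F : Finset ℕ) : Prop := ∀ a ∈ E, ∀ b ∈ F, a < b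

/-- `min E` (junk value `0` when `E = ∅`). -/
noncomputable def minOf (E : Finset ℕ) : ℕ := sInf (E : Set ℕ)

/-- `{E₁, …, E_n}` is `𝓕`-admissible: the `Eᵢ` are nonempty, `E₁ < ⋯ < E_n`
and `{min E₁, …, min E_n} ∈ 𝓕`. -/
def IsAdmissible (𝓕 : Set (Finset ℕ)) (l : List (Finset ℕ)) : Prop :=
  (∀ E ∈ l, E.Nonempty) ∧ l.Chain' finLT ∧ (l.map minOf).toFinset ∈ 𝓕

/-- `𝓜[𝓝]`. -/
def famComp (M N : Set (Finset ℕ)) : Set (Finset ℕ) :=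
  {F | ∃ l : List (Finset ℕ), IsAdmissible M l ∧ (∀ E ∈ l, E ∈ N) ∧
    F = l.foldr (· ∪ ·) ∅}

/-- `(𝓜, 𝓝) = {M ∪ N : M < N, M ∈ 𝓜, N ∈ 𝓝}`. -/
def pairFam (M N : Set (Finset ℕ)) : Set (Finset ℕ) :=
  {F | ∃ A ∈ M, ∃ B ∈ N, finLT A B ∧ F = A ∪ B}

/-- `𝓜² = (𝓜, 𝓜)`. -/
def sqFam (M : Set (Finset ℕ)) : Set (Finset ℕ) := pairFam M M

/-- `S₀ = {{n} : n ∈ ℕ} ∪ {∅}`. -/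
def schreierZero : Set (Finset ℕ) := {F : Finset ℕ | F.card ≤ 1}

/-- `S₁ = {F : |F| ≤ min F}`. -/
noncomputable def schreierOne : Set (Finset ℕ) := {F : Finset ℕ | F.card ≤ minOf F}

/-- A ladder system: for every countable limit ordinal `o`, `seq o` is a strictly
increasing sequence of ordinals below `o` with supremum `o`. -/
def IsCtblLadder (seq : Ordinal.{0} → ℕ → Ordinal.{0}) : Prop :=
  ∀ o : Ordinal, o.card ≤ Cardinal.aleph0 → Order.IsSuccLimit o →
    StrictMono (seq o) ∧ (∀ n : ℕ, seq o n < o) ∧ (⨆ n : ℕ, seq o n) = o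

/-- The Schreier classes `S_α`, relative to a choice `seq` of ladders at limit
ordinals: `S₀` is the singletons together with `∅`, `S_{α+1} = S₁[S_α]`, and at a
limit `α` (with ladder `(α_n) = seq α`), `S_α = {F : F ∈ S_{α_n} for some n ≤ |F|}`. -/
noncomputable def schreier (seq : Ordinal.{0} → ℕ → Ordinal.{0}) (o : Ordinal.{0}) :
    Set (Finset ℕ) :=
  Ordinal.limitRecOn (motive := fun _ => Set (Finset ℕ)) o schreierZero
    (fun _ S => famComp schreierOne S)
    (fun o _ ih => {F | ∃ n : ℕ, n ≤ F.card ∧ ∃ h : seq o n < o, F ∈ ih (seq o n) h})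

/-- `σ_F(x) = ∑_{n ∈ F} |x n|`. -/
noncomputable def sigmaF (F : Finset ℕ) (x : ℕ →₀ ℝ) : ℝ := ∑ n ∈ F, |x n|

/-- `‖x‖_𝓕 = sup_{F ∈ 𝓕} σ_F(x)`. -/
noncomputable def famNorm (𝓕 : Set (Finset ℕ)) (x : ℕ →₀ ℝ) : ℝ :=
  sSup {r : ℝ | ∃ F ∈ 𝓕, r = sigmaF F x}

/-- `E x`: the coordinate restriction of `x` to `E`. -/
noncomputable def restr (E : Finset ℕ) (x : ℕ →₀ ℝ) : ℕ →₀ ℝ :=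
  Finsupp.filter (· ∈ E) x

/-- The norms `‖·‖_n` (when `Sadm = S_β`), resp. `‖·‖′_n` (when `Sadm = (S_β)²`):
`‖·‖₀ = ‖·‖_{S_α}` and
`‖x‖_{n+1} = max{‖x‖_n, sup{(1/2)∑ᵢ ‖Eᵢx‖_n : {E₁,…,E_j} Sadm-admissible}}`. -/
noncomputable def normSeq (Sa Sadm : Set (Finset ℕ)) : ℕ → (ℕ →₀ ℝ) → ℝ
  | 0, x => famNorm Sa x
  | n + 1, x =>
      max (normSeq Sa Sadm n x)
        (sSup {r : ℝ | ∃ l : List (Finset ℕ), IsAdmissible Sadm l ∧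
          r = (1 / 2) * ((l.map fun E => normSeq Sa Sadm n (restr E x)).sum)})

/-- `‖x‖_{T̃}` (resp. `‖x‖_{T̈}`): the limit (= supremum, the sequence being
nondecreasing) of the norms `‖x‖_n` (resp. `‖x‖′_n`). -/
noncomputable def tnorm (Sa Sadm : Set (Finset ℕ)) (x : ℕ →₀ ℝ) : ℝ :=
  ⨆ n : ℕ, normSeq Sa Sadm n x

/-- The families `𝓕_n` (with `Sadm = S_β`), resp. `𝓕′_n` (with `Sadm = (S_β)²`):
`𝓕₀ = S_α`, `𝓕_{n+1} = Sadm[𝓕_n]`. -/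
def famF (Sa Sadm : Set (Finset ℕ)) : ℕ → Set (Finset ℕ)
  | 0 => Sa
  | n + 1 => famComp Sadm (famF Sa Sadm n)

/-- The families `𝓖_n` (with `Sadm = S_β`), resp. `𝓖′_n` (with `Sadm = (S_β)²`),
reindexed: `famG Sadm n = 𝓖_{n+1}`, i.e. `famG Sadm 0 = 𝓖₁ = Sadm` and
`𝓖_{n+2} = Sadm[𝓖_{n+1}]`. -/
def famG (Sadm : Set (Finset ℕ)) : ℕ → Set (Finset ℕ)
  | 0 => Sadm
  | n + 1 => famComp Sadm (famG Sadm n)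

/-- Hereditary family. -/
def Hereditary (𝓕 : Set (Finset ℕ)) : Prop := ∀ A ∈ 𝓕, ∀ B ⊆ A, B ∈ 𝓕

/-- Spreading family. -/
def Spreading (𝓕 : Set (Finset ℕ)) : Prop :=
  ∀ A ∈ 𝓕, ∀ g : ℕ → ℕ, StrictMonoOn g (A : Set ℕ) → (∀ a ∈ A, a ≤ g a) →
    A.image g ∈ 𝓕

/-- Compactness of a family of finite sets, viewed inside `2^ℕ` (ℕ → Bool with the
product topology) via characteristic functions. -/
def CompactFam (𝓕 : Set (Finset ℕ)) : Prop :=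
  IsCompact ((fun A : Finset ℕ => fun n : ℕ => decide (n ∈ A)) '' 𝓕)

/-- Regular family: hereditary, spreading and compact. -/
def RegularFam (𝓕 : Set (Finset ℕ)) : Prop :=
  Hereditary 𝓕 ∧ Spreading 𝓕 ∧ CompactFam 𝓕

/-- The Cantor–Bendixson derivative of a family of finite subsets of ℕ: the set of
its limit points in the product topology of `2^ℕ` (a basic neighbourhood of `A` is
determined by an agreement of initial segments). -/
def famDeriv (𝓕 : Set (Finset ℕ)) : Set (Finset ℕ) :=
  {A | ∀ m : ℕ, ∃ B ∈ 𝓕, B ≠ A ∧ B.filter (· ≤ m) = A.filter (· ≤ m)}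

/-- Iterated Cantor–Bendixson derivatives `𝓕^{(o)}`. -/
noncomputable def famDerivIter (𝓕 : Set (Finset ℕ)) (o : Ordinal.{0}) : Set (Finset ℕ) :=
  Ordinal.limitRecOn (motive := fun _ => Set (Finset ℕ)) o 𝓕
    (fun _ S => famDeriv S)
    (fun o _ ih => ⋂ (o' : Ordinal) (h : o' < o), ih o' h)

/-- One step of the standard representation: `A` is obtained from the remainder `R`
as `R ∩ [1, k]` where `k` is the largest element of `F` with `R ∩ [1, k] ∈ 𝓝`. -/
def stepOf (N : Set (Finset ℕ)) (F R A : Finset ℕ) : Prop :=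
  ∃ k ∈ F, A = R.filter (· ≤ k) ∧ A ∈ N ∧
    ∀ k' ∈ F, R.filter (· ≤ k') ∈ N → k' ≤ k

/-- `IsStdRepFrom N F R L`: starting from remainder `R`, the list `L` is produced by
the greedy recursion defining the standard representation, exhausting `R`. -/
def IsStdRepFrom (N : Set (Finset ℕ)) (F : Finset ℕ) : Finset ℕ → List (Finset ℕ) → Prop
  | R, [] => R = ∅
  | R, A :: L => stepOf N F R A ∧ IsStdRepFrom N F (R \ A) L

/-- `L` is the standard representation of `F` (as an element of `𝓜[𝓝]`). -/
def IsStdRep (N : Set (Finset ℕ)) (F : Finset ℕ) (L : List (Finset ℕ)) : Prop :=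
  IsStdRepFrom N F F L

section Trees

variable {X : Type*}

/-- A tree on `X`: a set of nonempty finite sequences closed under nonempty initial
segments. -/
def IsTree (T : Set (List X)) : Prop :=
  ∀ l ∈ T, l ≠ [] ∧ ∀ m : ℕ, 0 < m → m < l.length → l.take m ∈ T

/-- A tree is well-founded if it has no infinite branch. -/
def WellFoundedTree (T : Set (List X)) : Prop :=
  ¬ ∃ f : ℕ → X, ∀ n : ℕ, (List.ofFn fun i : Fin (n + 1) => f i) ∈ T

/-- The derived tree `D(T)`. -/
def treeDeriv (T : Set (List X)) : Set (List X) :=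
  {l | l ∈ T ∧ ∃ x : X, l ++ [x] ∈ T}

/-- Iterated derived trees `D^o(T)`. -/
noncomputable def treeDerivIter (T : Set (List X)) (o : Ordinal.{0}) : Set (List X) :=
  Ordinal.limitRecOn (motive := fun _ => Set (List X)) o T
    (fun _ S => treeDeriv S)
    (fun o _ ih => ⋂ (o' : Ordinal) (h : o' < o), ih o' h)

/-- The order `o(T)` of a (well-founded) tree. -/
noncomputable def treeOrder (T : Set (List X)) : Ordinal.{0} :=
  sInf {o : Ordinal | treeDerivIter T o = ∅}

end Trees

section Banach

variable (X : Type) [NormedAddCommGroup X] [NormedSpace ℝ X]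

/-- `cs` witnesses that the node `l` is a finite block basis of `(e_i)`: each entry
of `l` is the (finite, nonzero) linear combination of the `e_i` given by the
corresponding entry of `cs`, and the supports are successive. -/
def IsBlockNode (e : ℕ → X) (l : List X) (cs : List (ℕ →₀ ℝ)) : Prop :=
  cs.length = l.length ∧
  (∀ (i : ℕ) (h : i < cs.length) (h' : i < l.length),
    l.get ⟨i, h'⟩ = (cs.get ⟨i, h⟩).sum fun n r => r • e n) ∧
  (∀ c ∈ cs, c ≠ 0) ∧
  cs.Chain' fun c d => finLT c.support d.support

/-- `e` is a (Schauder) basis of `X`. -/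
def IsSchauderBasis (e : ℕ → X) : Prop :=
  ∀ x : X, ∃! a : ℕ → ℝ,
    Tendsto (fun n => ∑ i ∈ Finset.range n, a i • e i) atTop (𝓝 x)

/-- An `ℓ¹`-`K` tree on `X`: a tree on the unit sphere of `X` such that every node
`(x₁, …, x_n)` satisfies `‖∑ aᵢ xᵢ‖ ≥ K⁻¹ ∑ |aᵢ|`. -/
def IsL1Tree (K : ℝ) (T : Set (List X)) : Prop :=
  IsTree T ∧ ∀ l ∈ T, (∀ x ∈ l, ‖x‖ = 1) ∧
    ∀ a : Fin l.length → ℝ, K⁻¹ * ∑ i, |a i| ≤ ‖∑ i : Fin l.length, a i • l.get i‖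

/-- `I(X, K)`: the supremum of the orders of well-founded `ℓ¹`-`K` trees on `X`. -/
noncomputable def bourgainIndexK (K : ℝ) : Ordinal.{0} :=
  ⨆ T : {T : Set (List X) // IsL1Tree X K T ∧ WellFoundedTree T}, treeOrder T.1

/-- The Bourgain `ℓ¹`-index `I(X) = sup_{1 ≤ K < ∞} I(X, K)`. -/
noncomputable def bourgainIndex : Ordinal.{0} :=
  ⨆ K : {K : ℝ // 1 ≤ K}, bourgainIndexK X K.1

/-- `I_b(X, K)` relative to the basis `e`: the supremum of the orders of
well-founded `ℓ¹`-`K` block trees on `X`. -/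
noncomputable def blockIndexK (e : ℕ → X) (K : ℝ) : Ordinal.{0} :=
  ⨆ T : {T : Set (List X) //
      IsL1Tree X K T ∧ (∀ l ∈ T, ∃ cs, IsBlockNode X e l cs) ∧ WellFoundedTree T},
    treeOrder T.1

/-- The block `ℓ¹`-index `I_b(X) = sup_{1 ≤ K < ∞} I_b(X, K)`. -/
noncomputable def blockIndex (e : ℕ → X) : Ordinal.{0} :=
  ⨆ K : {K : ℝ // 1 ≤ K}, blockIndexK X e K.1

end Banach

section PartA
open List

lemma minOf_mem {E : Finset ℕ} (h : E.Nonempty) : minOf E ∈ E := by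
  have : (E : Set ℕ).Nonempty := by exact_mod_cast h
  simpa [minOf] using Nat.sInf_mem this

lemma minOf_le {E : Finset ℕ} {a : ℕ} (ha : a ∈ E) : minOf E ≤ a :=
  Nat.sInf_le (by simpa using ha)

lemma finLT_mono {E F G H : Finset ℕ} (hG : G ⊆ E) (hH : H ⊆ F) (h : finLT E F) :
    finLT G H := fun a ha b hb => h a (hG ha) b (hH hb)

lemma pairwise_finLT {l : List (Finset ℕ)} (hne : ∀ E ∈ l, E.Nonempty)
    (hc : l.Chain' finLT) : l.Pairwise finLT := by
  set R : Finset ℕ → Finset ℕ → Prop := fun E F => F.Nonempty ∧ finLT E F with hR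
  haveI : IsTrans (Finset ℕ) R := ⟨by
    rintro a b c ⟨hb, hab⟩ ⟨hc', hbc⟩
    exact ⟨hc', fun u hu v hv => lt_trans (hab u hu _ hb.choose_spec) (hbc _ hb.choose_spec v hv)⟩⟩
  have hcR : l.Chain' R := by
    clear hR
    induction l with
    | nil => exact List.isChain_nil
    | cons a t ih =>
      cases t with
      | nil => exact List.isChain_singleton _
      | cons b t' =>
        rw [List.Chain', List.isChain_cons_cons] at hc ⊢
        exact ⟨⟨hne b (by simp), hc.1⟩,
          ih (fun E hE => hne E (List.mem_cons_of_mem _ hE)) hc.2⟩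
  exact (List.isChain_iff_pairwise.mp hcR).imp (fun h => h.2)

lemma pairwise_disjoint_of_finLT {l : List (Finset ℕ)} (h : l.Pairwise finLT) :
    l.Pairwise (fun E F => _root_.Disjoint E F) := by
  refine h.imp (fun {E F} hEF => Finset.disjoint_left.mpr fun {a} haE haF => ?_)
  exact lt_irrefl a (hEF a haE a haF)

lemma mem_foldr_union {l : List (Finset ℕ)} {n : ℕ} :
    n ∈ l.foldr (· ∪ ·) ∅ ↔ ∃ E ∈ l, n ∈ E := by
  induction l with
  | nil => simp
  | cons a t ih => simp [ih]

lemma foldr_union_subset {l : List (Finset ℕ)} {S : Finset ℕ} (h : ∀ E ∈ l, E ⊆ S) :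
    l.foldr (· ∪ ·) ∅ ⊆ S := fun n hn => by
  obtain ⟨E, hE, hnE⟩ := mem_foldr_union.mp hn
  exact h E hE hnE

lemma sigmaF_nonneg (F : Finset ℕ) (x : ℕ →₀ ℝ) : 0 ≤ sigmaF F x :=
  Finset.sum_nonneg fun _ _ => abs_nonneg _

lemma sigmaF_mono {F G : Finset ℕ} (h : F ⊆ G) (x : ℕ →₀ ℝ) :
    sigmaF F x ≤ sigmaF G x :=
  Finset.sum_le_sum_of_subset_of_nonneg h fun _ _ _ => abs_nonneg _

lemma sum_sigmaF_of_disjoint {l : List (Finset ℕ)}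
    (h : l.Pairwise (fun E F => _root_.Disjoint E F))
    (x : ℕ →₀ ℝ) : (l.map fun E => sigmaF E x).sum = sigmaF (l.foldr (· ∪ ·) ∅) x := by
  induction l with
  | nil => simp [sigmaF]
  | cons a t ih =>
    rw [List.pairwise_cons] at h
    have hd : _root_.Disjoint a (t.foldr (· ∪ ·) ∅) := by
      rw [Finset.disjoint_left]
      intro n hna hnf
      obtain ⟨E, hE, hnE⟩ := mem_foldr_union.mp hnf
      exact Finset.disjoint_left.mp (h.1 E hE) hna hnE
    simp only [List.map_cons, List.sum_cons, List.foldr_cons, ih h.2]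
    rw [show sigmaF (a ∪ foldr (· ∪ ·) ∅ t) x = ∑ n ∈ a ∪ foldr (· ∪ ·) ∅ t, |x n| from rfl,
      Finset.sum_union hd]; rfl

lemma restr_apply (E : Finset ℕ) (x : ℕ →₀ ℝ) (n : ℕ) :
    restr E x n = if n ∈ E then x n else 0 := by
  simp [restr, Finsupp.filter_apply]

lemma restr_restr (D E : Finset ℕ) (x : ℕ →₀ ℝ) :
    restr D (restr E x) = restr (D ∩ E) x := by
  ext n
  simp only [restr_apply, Finset.mem_inter]
  by_cases h1 : n ∈ D <;> by_cases h2 : n ∈ E <;> simp [h1, h2]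

lemma restr_empty (x : ℕ →₀ ℝ) : restr ∅ x = 0 := by
  ext n; simp [restr_apply]

lemma sigmaF_restr (F E : Finset ℕ) (x : ℕ →₀ ℝ) :
    sigmaF F (restr E x) = sigmaF (F ∩ E) x := by
  classical
  rw [sigmaF, sigmaF, ← Finset.sum_ite_mem F E (fun n => |x n|)]
  refine Finset.sum_congr rfl fun n _ => ?_
  rw [restr_apply]
  by_cases h : n ∈ E <;> simp [h]

lemma sigmaF_inter_support (F : Finset ℕ) (x : ℕ →₀ ℝ) :
    sigmaF F x = sigmaF (F ∩ x.support) x := by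
  classical
  rw [sigmaF, sigmaF, ← Finset.sum_ite_mem F x.support (fun n => |x n|)]
  refine Finset.sum_congr rfl fun n _ => ?_
  by_cases h : n ∈ x.support
  · simp [h]
  · have : x n = 0 := by simpa [Finsupp.mem_support_iff, not_not] using h
    simp [h, this]

lemma sigmaF_le_l1 (F : Finset ℕ) (x : ℕ →₀ ℝ) : sigmaF F x ≤ sigmaF x.support x := by
  rw [sigmaF_inter_support]
  exact sigmaF_mono (Finset.inter_subset_right) x

end PartA

section PartB
open List

/-- Lookup the second coordinate of the pair whose first coordinate is `m`. -/
private def lookupSnd (ps : List (ℕ × ℕ)) (m : ℕ) : ℕ :=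
  ps.foldr (fun p acc => if p.1 = m then p.2 else acc) m

private lemma lookupSnd_cons (hd : ℕ × ℕ) (tl : List (ℕ × ℕ)) (m : ℕ) :
    lookupSnd (hd :: tl) m = if hd.1 = m then hd.2 else lookupSnd tl m := rfl

private lemma lookupSnd_eval : ∀ {ps : List (ℕ × ℕ)},
    ps.Pairwise (fun p q => p.2 < q.1) → (∀ p ∈ ps, p.1 ≤ p.2) →
    ∀ p ∈ ps, lookupSnd ps p.1 = p.2 := by
  intro ps
  induction ps with
  | nil => intro _ _ p hp; simp at hp
  | cons hd tl ih =>
    intro hp hle p hpmem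
    rw [List.pairwise_cons] at hp
    rcases List.mem_cons.mp hpmem with h | h
    · subst h; simp [lookupSnd_cons]
    · have h1 : hd.2 < p.1 := hp.1 p h
      have h2 : hd.1 ≤ hd.2 := hle hd (List.mem_cons_self)
      rw [lookupSnd_cons, if_neg (by omega)]
      exact ih hp.2 (fun q hq => hle q (List.mem_cons_of_mem _ hq)) p h

/-- Key spreading lemma: min-sets can be shifted upwards. -/
lemma shift_mem {M : Set (Finset ℕ)} (hs : Spreading M) {ps : List (ℕ × ℕ)}
    (hp : ps.Pairwise (fun p q => p.2 < q.1)) (hle : ∀ p ∈ ps, p.1 ≤ p.2)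
    (hmem : (ps.map Prod.fst).toFinset ∈ M) :
    (ps.map Prod.snd).toFinset ∈ M := by
  classical
  set A : Finset ℕ := (ps.map Prod.fst).toFinset with hA
  set g : ℕ → ℕ := lookupSnd ps with hg
  have hmemA : ∀ m, m ∈ A ↔ ∃ p ∈ ps, p.1 = m := by
    intro m; simp [hA, List.mem_toFinset, List.mem_map]
  have geval : ∀ p ∈ ps, g p.1 = p.2 := lookupSnd_eval hp hle
  -- two members with smaller fst have smaller snd
  have key : ∀ p ∈ ps, ∀ q ∈ ps, p.1 < q.1 → p.2 < q.2 := by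
    intro p hpm q hqm hlt
    obtain ⟨i, hi, hpi⟩ := List.mem_iff_getElem.mp hpm
    obtain ⟨j, hj, hqj⟩ := List.mem_iff_getElem.mp hqm
    rcases lt_trichotomy i j with hij | hij | hij
    · have := List.pairwise_iff_getElem.mp hp i j hi hj hij
      rw [hpi, hqj] at this
      exact lt_of_lt_of_le this (hle q hqm)
    · subst hij; rw [hpi] at hqj; subst hqj; omega
    · have := List.pairwise_iff_getElem.mp hp j i hj hi hij
      rw [hpi, hqj] at this
      have h2 := hle q hqm
      omega
  have hmono : StrictMonoOn g (A : Set ℕ) := by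
    intro m1 hm1 m2 hm2 hlt
    obtain ⟨p, hpm, hp1⟩ := (hmemA m1).mp (by exact_mod_cast hm1)
    obtain ⟨q, hqm, hq1⟩ := (hmemA m2).mp (by exact_mod_cast hm2)
    subst hp1; subst hq1
    rw [geval p hpm, geval q hqm]
    exact key p hpm q hqm hlt
  have hge : ∀ a ∈ A, a ≤ g a := by
    intro a ha
    obtain ⟨p, hpm, hp1⟩ := (hmemA a).mp ha
    subst hp1; rw [geval p hpm]; exact hle p hpm
  have himg : A.image g = (ps.map Prod.snd).toFinset := by
    ext m
    simp only [Finset.mem_image, List.mem_toFinset, List.mem_map]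
    constructor
    · rintro ⟨m1, hm1, rfl⟩
      obtain ⟨p, hpm, hp1⟩ := (hmemA m1).mp hm1
      subst hp1
      exact ⟨p, hpm, (geval p hpm).symm ▸ rfl⟩
    · rintro ⟨p, hpm, rfl⟩
      exact ⟨p.1, (hmemA p.1).mpr ⟨p, hpm, rfl⟩, geval p hpm⟩
  rw [← himg]
  exact hs A hmem g hmono hge

/-- The workhorse: shrinking each member of an admissible list (and discarding the
empty ones) keeps it admissible, provided the family is hereditary and spreading. -/
lemma isAdmissible_shrink {M : Set (Finset ℕ)} (hMh : Hereditary M) (hMs : Spreading M)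
    {l Gs : List (Finset ℕ)} (hl : IsAdmissible M l) (hsub : List.Forall₂ (· ⊆ ·) Gs l) :
    IsAdmissible M (Gs.filter (fun G => G.Nonempty)) := by
  classical
  obtain ⟨hne, hch, hmin⟩ := hl
  have hlen : Gs.length = l.length := hsub.length_eq
  have hsub' : ∀ (i : ℕ) (h1 : i < Gs.length) (h2 : i < l.length), Gs[i] ⊆ l[i] := by
    have := List.forall₂_iff_get.mp hsub
    intro i h1 h2; exact this.2 i h1 h2
  have hpl : l.Pairwise finLT := pairwise_finLT hne hch
  have hpGs : Gs.Pairwise finLT := by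
    rw [List.pairwise_iff_getElem] at hpl ⊢
    intro i j hi hj hij
    exact finLT_mono (hsub' i hi (hlen ▸ hi)) (hsub' j hj (hlen ▸ hj))
      (hpl i j (hlen ▸ hi) (hlen ▸ hj) hij)
  refine ⟨?_, ((hpGs.filter _).isChain), ?_⟩
  · intro G hG
    have := List.mem_filter.mp hG
    simpa using this.2
  -- min set
  set ps : List (ℕ × ℕ) := (l.zip Gs).filterMap
    (fun p => if p.2.Nonempty then some (minOf p.1, minOf p.2) else none) with hps
  have memps : ∀ q : ℕ × ℕ, q ∈ ps ↔
      ∃ p ∈ l.zip Gs, p.2.Nonempty ∧ q = (minOf p.1, minOf p.2) := by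
    intro q
    rw [hps, List.mem_filterMap]
    constructor
    · rintro ⟨p, hpm, hq⟩
      by_cases h : p.2.Nonempty
      · rw [if_pos h] at hq
        exact ⟨p, hpm, h, (Option.some_inj.mp hq).symm⟩
      · rw [if_neg h] at hq; exact absurd hq (by simp)
    · rintro ⟨p, hpm, h, rfl⟩
      exact ⟨p, hpm, if_pos h⟩
  have hmemzip : ∀ p : Finset ℕ × Finset ℕ, p ∈ l.zip Gs →
      p.2 ⊆ p.1 ∧ p.1 ∈ l ∧ p.2 ∈ Gs := by
    rintro ⟨E, G⟩ hm
    refine ⟨?_, (List.of_mem_zip hm).1, (List.of_mem_zip hm).2⟩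
    obtain ⟨i, hi, hpi⟩ := List.mem_iff_getElem.mp hm
    rw [List.getElem_zip] at hpi
    obtain ⟨h1, h2⟩ := Prod.mk.inj hpi
    rw [← h1, ← h2]
    exact hsub' i _ _
  have hzipmem : ∀ G ∈ Gs, ∃ E, (E, G) ∈ l.zip Gs := by
    intro G hG
    obtain ⟨i, hi, hGi⟩ := List.mem_iff_getElem.mp hG
    refine ⟨l[i]'(hlen ▸ hi), ?_⟩
    have hi' : i < (l.zip Gs).length := by rw [List.length_zip]; omega
    have := List.getElem_mem hi'
    rwa [List.getElem_zip, hGi] at this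
  have hpzip : (l.zip Gs).Pairwise
      (fun p q => p.2.Nonempty → q.2.Nonempty → minOf p.2 < minOf q.1) := by
    rw [List.pairwise_iff_getElem]
    intro i j hi hj hij
    rw [List.length_zip] at hi hj
    have hi1 : i < l.length := by omega
    have hi2 : i < Gs.length := by omega
    have hj1 : j < l.length := by omega
    have hj2 : j < Gs.length := by omega
    rw [List.getElem_zip, List.getElem_zip]
    intro hG1 hG2
    have hfin : finLT l[i] l[j] := List.pairwise_iff_getElem.mp hpl i j hi1 hj1 hij
    have hm1 : minOf (Gs[i]'hi2) ∈ l[i]'hi1 := hsub' i hi2 hi1 (minOf_mem hG1)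
    have hm2 : minOf (l[j]'hj1) ∈ l[j]'hj1 :=
      minOf_mem (hne _ (List.getElem_mem hj1))
    exact hfin _ hm1 _ hm2
  have hppairs : ps.Pairwise (fun p q => p.2 < q.1) := by
    rw [hps, List.pairwise_filterMap]
    refine hpzip.imp ?_
    intro a a' h b hb b' hb'
    by_cases h1 : a.2.Nonempty
    · by_cases h2 : a'.2.Nonempty
      · rw [if_pos h1] at hb; rw [if_pos h2] at hb'
        obtain rfl := Option.mem_some_iff.mp hb
        obtain rfl := Option.mem_some_iff.mp hb'
        exact h h1 h2
      · rw [if_neg h2] at hb'; exact absurd hb' (by simp)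
    · rw [if_neg h1] at hb; exact absurd hb (by simp)
  have hle : ∀ p ∈ ps, p.1 ≤ p.2 := by
    intro p hp
    obtain ⟨q, hqm, hqne, rfl⟩ := (memps p).mp hp
    exact minOf_le ((hmemzip q hqm).1 (minOf_mem hqne))
  have hfstmem : (ps.map Prod.fst).toFinset ∈ M := by
    refine hMh _ hmin _ ?_
    intro m hm
    rw [List.mem_toFinset, List.mem_map] at hm ⊢
    obtain ⟨q, hqm, rfl⟩ := hm
    obtain ⟨p, hpm, hpne, rfl⟩ := (memps q).mp hqm
    exact ⟨p.1, (hmemzip p hpm).2.1, rfl⟩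
  have hfinal := shift_mem hMs hppairs hle hfstmem
  have heq : (ps.map Prod.snd).toFinset
      = ((Gs.filter (fun G => G.Nonempty)).map minOf).toFinset := by
    ext m
    rw [List.mem_toFinset, List.mem_toFinset, List.mem_map, List.mem_map]
    constructor
    · rintro ⟨q, hqm, rfl⟩
      obtain ⟨p, hpm, hpne, rfl⟩ := (memps q).mp hqm
      exact ⟨p.2, List.mem_filter.mpr ⟨(hmemzip p hpm).2.2, by simpa using hpne⟩, rfl⟩
    · rintro ⟨G, hGm, rfl⟩
      rw [List.mem_filter] at hGm
      obtain ⟨E, hE⟩ := hzipmem G hGm.1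
      refine ⟨(minOf E, minOf G), (memps _).mpr ⟨(E, G), hE, by simpa using hGm.2, rfl⟩, rfl⟩
  rwa [heq] at hfinal

end PartB

section PartC
open List

lemma isAdmissible_nil {M : Set (Finset ℕ)} (hM : ∅ ∈ M) :
    IsAdmissible M ([] : List (Finset ℕ)) :=
  ⟨by simp, List.isChain_nil, by simpa using hM⟩

lemma empty_mem_famComp {M N : Set (Finset ℕ)} (hM : ∅ ∈ M) : ∅ ∈ famComp M N :=
  ⟨[], isAdmissible_nil hM, by simp, rfl⟩

lemma hereditary_schreierOne : Hereditary schreierOne := by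
  intro A hA B hB
  rcases B.eq_empty_or_nonempty with rfl | hBne
  · simp [schreierOne, minOf]
  · have h1 : B.card ≤ A.card := Finset.card_le_card hB
    have h2 : minOf A ≤ minOf B := minOf_le (hB (minOf_mem hBne))
    exact le_trans h1 (le_trans hA h2)

lemma spreading_schreierOne : Spreading schreierOne := by
  intro A hA g hg hge
  rcases A.eq_empty_or_nonempty with rfl | hAne
  · simpa using hA
  · have h1 : (A.image g).card = A.card := Finset.card_image_of_injOn hg.injOn
    have h2 : minOf A ≤ minOf (A.image g) := by
      obtain ⟨a, ha, hga⟩ := Finset.mem_image.mp (minOf_mem (hAne.image g))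
      rw [← hga]
      exact le_trans (minOf_le ha) (hge a ha)
    rw [schreierOne, Set.mem_setOf_eq, h1]
    exact le_trans hA h2

lemma spreading_schreierZero : Spreading schreierZero := by
  intro A hA g hg hge
  rw [schreierZero, Set.mem_setOf_eq] at hA ⊢
  exact le_trans Finset.card_image_le hA

lemma hereditary_schreierZero : Hereditary schreierZero := by
  intro A hA B hB
  exact le_trans (Finset.card_le_card hB) hA

private lemma foldr_union_image (g : ℕ → ℕ) (l : List (Finset ℕ)) :
    ((l.map (Finset.image g)).foldr (· ∪ ·) ∅) = Finset.image g (l.foldr (· ∪ ·) ∅) := by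
  induction l with
  | nil => simp
  | cons a t ih => simp [ih, Finset.image_union]

private lemma minOf_image {g : ℕ → ℕ} {E F : Finset ℕ} (hE : E.Nonempty) (hEF : E ⊆ F)
    (hg : StrictMonoOn g (F : Set ℕ)) : minOf (E.image g) = g (minOf E) := by
  have hmem : minOf E ∈ E := minOf_mem hE
  apply _root_.le_antisymm
  · exact minOf_le (Finset.mem_image_of_mem g hmem)
  · obtain ⟨a, ha, hga⟩ := Finset.mem_image.mp (minOf_mem (hE.image g))
    rw [← hga]
    rcases eq_or_lt_of_le (minOf_le (E := E) ha) with h | h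
    · rw [h]
    · exact le_of_lt (hg (hEF hmem) (hEF ha) h)

lemma spreading_famComp {M N : Set (Finset ℕ)} (hM : Spreading M) (hN : Spreading N) :
    Spreading (famComp M N) := by
  rintro F ⟨l, ⟨hne, hch, hmin⟩, hmemN, rfl⟩ g hg hge
  classical
  set U := l.foldr (· ∪ ·) ∅ with hU
  have hsubF : ∀ E ∈ l, E ⊆ U := by
    intro E hE n hn; exact mem_foldr_union.mpr ⟨E, hE, hn⟩
  have hpl : l.Pairwise finLT := pairwise_finLT hne hch
  refine ⟨l.map (Finset.image g), ⟨?_, ?_, ?_⟩, ?_, (foldr_union_image g l).symm⟩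
  · intro E hE
    obtain ⟨E', hE', rfl⟩ := List.mem_map.mp hE
    exact (hne E' hE').image g
  · refine List.Pairwise.isChain ?_
    rw [List.pairwise_map]
    rw [List.pairwise_iff_getElem] at hpl ⊢
    intro i j hi hj hij
    intro a ha b hb
    obtain ⟨a', ha', rfl⟩ := Finset.mem_image.mp ha
    obtain ⟨b', hb', rfl⟩ := Finset.mem_image.mp hb
    exact hg (hsubF _ (List.getElem_mem hi) ha') (hsubF _ (List.getElem_mem hj) hb')
      (hpl i j hi hj hij a' ha' b' hb')
  · have hminsub : ((l.map minOf).toFinset : Set ℕ) ⊆ (U : Set ℕ) := by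
      intro m hm
      simp only [Finset.coe_mem, List.coe_toFinset, Set.mem_setOf_eq, List.mem_map] at hm
      obtain ⟨E, hE, rfl⟩ := hm
      exact hsubF E hE (minOf_mem (hne E hE))
    have heq : ((l.map (Finset.image g)).map minOf).toFinset
        = ((l.map minOf).toFinset).image g := by
      ext m
      simp only [List.mem_toFinset, List.mem_map, Finset.mem_image]
      constructor
      · rintro ⟨E1, ⟨E, hE, rfl⟩, rfl⟩
        exact ⟨minOf E, ⟨E, hE, rfl⟩, (minOf_image (hne E hE) (hsubF E hE) hg).symm⟩
      · rintro ⟨m', ⟨E, hE, rfl⟩, rfl⟩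
        exact ⟨E.image g, ⟨E, hE, rfl⟩, minOf_image (hne E hE) (hsubF E hE) hg⟩
    rw [heq]
    refine hM _ hmin g (hg.mono hminsub) ?_
    intro a ha
    exact hge a (hminsub ha)
  · intro E hE
    obtain ⟨E', hE', rfl⟩ := List.mem_map.mp hE
    refine hN E' (hmemN E' hE') g (hg.mono ?_) (fun a ha => hge a (hsubF E' hE' ha))
    exact_mod_cast hsubF E' hE'

lemma hereditary_famComp {M N : Set (Finset ℕ)} (hMh : Hereditary M) (hMs : Spreading M)
    (hN : Hereditary N) : Hereditary (famComp M N) := by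
  rintro F ⟨l, hadm, hmemN, rfl⟩ B hB
  classical
  set Gs := l.map (· ∩ B) with hGs
  have hsub : List.Forall₂ (· ⊆ ·) Gs l := by
    rw [List.forall₂_iff_get]
    refine ⟨by simp [hGs], ?_⟩
    intro i h1 h2
    simp only [hGs, List.get_eq_getElem, List.getElem_map]
    exact Finset.inter_subset_left
  refine ⟨Gs.filter (fun G => G.Nonempty), isAdmissible_shrink hMh hMs hadm hsub, ?_, ?_⟩
  · intro G hG
    have hG' := (List.mem_filter.mp hG).1
    obtain ⟨E, hE, rfl⟩ := List.mem_map.mp hG'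
    exact hN E (hmemN E hE) _ Finset.inter_subset_left
  · ext n
    rw [mem_foldr_union]
    constructor
    · intro hn
      have hn' := hB hn
      obtain ⟨E, hE, hnE⟩ := mem_foldr_union.mp hn'
      refine ⟨E ∩ B, ?_, Finset.mem_inter.mpr ⟨hnE, hn⟩⟩
      rw [List.mem_filter]
      exact ⟨List.mem_map.mpr ⟨E, hE, rfl⟩, by simp; exact ⟨n, Finset.mem_inter.mpr ⟨hnE, hn⟩⟩⟩
    · rintro ⟨G, hG, hnG⟩
      obtain ⟨E, hE, rfl⟩ := List.mem_map.mp (List.mem_filter.mp hG).1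
      exact (Finset.mem_inter.mp hnG).2

lemma hereditary_sqFam {M : Set (Finset ℕ)} (hM : Hereditary M) : Hereditary (sqFam M) := by
  rintro F ⟨A, hA, C, hC, hAC, rfl⟩ B hB
  refine ⟨B ∩ A, hM A hA _ Finset.inter_subset_right, B ∩ C, hM C hC _ Finset.inter_subset_right,
    finLT_mono Finset.inter_subset_right Finset.inter_subset_right hAC, ?_⟩
  rw [← Finset.inter_union_distrib_left]
  exact (Finset.inter_eq_left.mpr hB).symm

lemma spreading_sqFam {M : Set (Finset ℕ)} (hM : Spreading M) : Spreading (sqFam M) := by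
  rintro F ⟨A, hA, C, hC, hAC, rfl⟩ g hg hge
  classical
  have hsA : (A : Set ℕ) ⊆ ((A ∪ C : Finset ℕ) : Set ℕ) :=
    Finset.coe_subset.mpr Finset.subset_union_left
  have hsC : (C : Set ℕ) ⊆ ((A ∪ C : Finset ℕ) : Set ℕ) :=
    Finset.coe_subset.mpr Finset.subset_union_right
  refine ⟨A.image g, hM A hA g (hg.mono hsA) (fun a ha => hge a (Finset.subset_union_left ha)),
    C.image g, hM C hC g (hg.mono hsC) (fun a ha => hge a (Finset.subset_union_right ha)),
    ?_, Finset.image_union A C⟩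
  intro a ha b hb
  obtain ⟨a', ha', rfl⟩ := Finset.mem_image.mp ha
  obtain ⟨b', hb', rfl⟩ := Finset.mem_image.mp hb
  exact hg (hsA ha') (hsC hb') (hAC a' ha' b' hb')

lemma empty_mem_sqFam {M : Set (Finset ℕ)} (hM : ∅ ∈ M) : ∅ ∈ sqFam M :=
  ⟨∅, hM, ∅, hM, by intro a ha; simp at ha, by simp⟩

end PartC

section PartD
open List

variable {seq : Ordinal.{0} → ℕ → Ordinal.{0}}

lemma schreier_zero : schreier seq 0 = schreierZero := by
  rw [schreier, Ordinal.limitRecOn_zero]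

lemma schreier_succ (o : Ordinal) :
    schreier seq (Order.succ o) = famComp schreierOne (schreier seq o) := by
  simp only [schreier, ← Ordinal.add_one_eq_succ, Ordinal.limitRecOn_add_one]

lemma schreier_limit {o : Ordinal} (h : Order.IsSuccLimit o) :
    schreier seq o = {F : Finset ℕ | ∃ n : ℕ, n ≤ F.card ∧ ∃ _ : seq o n < o,
      F ∈ schreier seq (seq o n)} := by
  rw [schreier, Ordinal.limitRecOn_limit _ _ _ _ h]
  rfl

lemma minOf_singleton (m : ℕ) : minOf ({m} : Finset ℕ) = m := by
  simp [minOf]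

lemma empty_mem_schreierOne : ∅ ∈ schreierOne := by
  simp [schreierOne, minOf]

lemma nat_le_strictMono {f : ℕ → Ordinal} (hf : StrictMono f) : ∀ n : ℕ, (n : Ordinal) ≤ f n := by
  intro n
  induction n with
  | zero => exact zero_le
  | succ n ih =>
    have h1 : ((n + 1 : ℕ) : Ordinal) = Order.succ (n : Ordinal) := by
      push_cast; rw [Ordinal.add_one_eq_succ]
    rw [h1]
    exact le_trans (Order.succ_le_succ ih) (Order.succ_le_of_lt (hf (Nat.lt_succ_self n)))

lemma empty_mem_schreier (hseq : IsCtblLadder seq) : ∀ {o : Ordinal},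
    o.card ≤ Cardinal.aleph0 → ∅ ∈ schreier seq o := by
  intro o
  induction o using Ordinal.limitRecOn with
  | zero => intro _; rw [schreier_zero]; simp [schreierZero]
  | add_one o ih => rw [Ordinal.add_one_eq_succ]; intro _; rw [schreier_succ]; exact empty_mem_famComp empty_mem_schreierOne
  | limit o ho ih =>
    intro hc
    obtain ⟨hmono, hlt, _⟩ := hseq o hc ho
    rw [schreier_limit ho]
    exact ⟨0, by simp, hlt 0, ih _ (hlt 0) (le_trans (Ordinal.card_le_card (hlt 0).le) hc)⟩

lemma schreier_eq_zero_singleton : ∀ {o : Ordinal} {F : Finset ℕ},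
    F ∈ schreier seq o → 0 ∈ F → F = {0} := by
  intro o
  induction o using Ordinal.limitRecOn with
  | zero =>
    intro F hF h0
    rw [schreier_zero] at hF
    exact Finset.eq_singleton_iff_unique_mem.mpr
      ⟨h0, fun b hb => Finset.card_le_one.mp hF b hb 0 h0⟩
  | add_one o ih =>
    rw [Ordinal.add_one_eq_succ]
    intro F hF h0
    rw [schreier_succ] at hF
    obtain ⟨l, ⟨hne, hch, hmin⟩, hmemN, rfl⟩ := hF
    obtain ⟨E, hE, h0E⟩ := mem_foldr_union.mp h0
    have hminE : minOf E = 0 := Nat.le_zero.mp (minOf_le h0E)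
    have h0min : (0 : ℕ) ∈ (l.map minOf).toFinset := by
      rw [List.mem_toFinset, List.mem_map]; exact ⟨E, hE, hminE⟩
    have hcard : (l.map minOf).toFinset.card ≤ 0 := le_trans hmin (minOf_le h0min)
    have := Finset.card_pos.mpr ⟨0, h0min⟩
    omega
  | limit o ho ih =>
    intro F hF h0
    rw [schreier_limit ho] at hF
    obtain ⟨n, _, h, hmem⟩ := hF
    exact ih _ h hmem h0

lemma schreier_one_singleton : ∀ {o : Ordinal} {F : Finset ℕ},
    F ∈ schreier seq o → 1 ∈ F → F = {1} := by
  intro o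
  induction o using Ordinal.limitRecOn with
  | zero =>
    intro F hF h1
    rw [schreier_zero] at hF
    exact Finset.eq_singleton_iff_unique_mem.mpr
      ⟨h1, fun b hb => Finset.card_le_one.mp hF b hb 1 h1⟩
  | add_one o ih =>
    rw [Ordinal.add_one_eq_succ]
    intro F hF h1
    rw [schreier_succ] at hF
    obtain ⟨l, ⟨hne, hch, hmin⟩, hmemN, rfl⟩ := hF
    obtain ⟨E, hE, h1E⟩ := mem_foldr_union.mp h1
    have hminE : minOf E ≤ 1 := minOf_le h1E
    rcases Nat.le_one_iff_eq_zero_or_eq_one.mp hminE with h0 | hm1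
    · -- min E = 0, so 0 ∈ E and E = {0}, contradicting 1 ∈ E
      have h0E : (0 : ℕ) ∈ E := h0 ▸ minOf_mem ⟨1, h1E⟩
      have := schreier_eq_zero_singleton (hmemN E hE) h0E
      rw [this] at h1E; simp at h1E
    · -- all mins equal 1, so there is a single block
      have h1min : (1 : ℕ) ∈ (l.map minOf).toFinset := by
        rw [List.mem_toFinset, List.mem_map]; exact ⟨E, hE, hm1⟩
      have hcard : (l.map minOf).toFinset.card ≤ 1 := le_trans hmin (minOf_le h1min)
      have hall : ∀ E' ∈ l, minOf E' = 1 := by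
        intro E' hE'
        have hmem' : minOf E' ∈ (l.map minOf).toFinset := by
          rw [List.mem_toFinset, List.mem_map]; exact ⟨E', hE', rfl⟩
        exact Finset.card_le_one.mp hcard _ hmem' 1 h1min
      rcases l with _ | ⟨E₁, _ | ⟨E₂, t⟩⟩
      · exact absurd hE (by simp)
      · have hEE₀ : E = E₁ := by simpa using hE
        subst hEE₀
        rw [show [E].foldr (· ∪ ·) ∅ = E ∪ ∅ from rfl, Finset.union_empty]
        exact ih (hmemN E (by simp)) h1E
      · exfalso
        have hfin : finLT E₁ E₂ := (List.isChain_cons_cons.mp hch).1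
        have hne₁ : E₁.Nonempty := hne E₁ (by simp)
        have hne₂ : E₂.Nonempty := hne E₂ (by simp)
        have := hfin _ (minOf_mem hne₁) _ (minOf_mem hne₂)
        rw [hall E₁ (by simp), hall E₂ (by simp)] at this
        omega
  | limit o ho ih =>
    intro F hF h1
    rw [schreier_limit ho] at hF
    obtain ⟨n, _, h, hmem⟩ := hF
    exact ih _ h hmem h1

lemma schreier_mem_of_small (hseq : IsCtblLadder seq) : ∀ {o : Ordinal},
    o.card ≤ Cardinal.aleph0 → ∀ F : Finset ℕ, F.Nonempty → 2 ≤ minOf F →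
    (F.card : Ordinal) ≤ o → F ∈ schreier seq o := by
  intro o
  induction o using Ordinal.limitRecOn with
  | zero =>
    intro _ F hFne _ hcard
    rw [nonpos_iff_eq_zero] at hcard
    have : F.card = 0 := by exact_mod_cast hcard
    exact absurd (Finset.card_eq_zero.mp this) hFne.ne_empty
  | add_one o ih =>
    rw [Ordinal.add_one_eq_succ]
    intro hc F hFne hmin2 hcard
    have hc' : o.card ≤ Cardinal.aleph0 :=
      le_trans (Ordinal.card_le_card (Order.le_succ o)) hc
    by_cases hle : (F.card : Ordinal) ≤ o
    · -- single block
      rw [schreier_succ]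
      refine ⟨[F], ⟨by simpa using hFne, List.isChain_singleton F, ?_⟩,
        by simpa using ih hc' F hFne hmin2 hle, by simp⟩
      have : (([F].map minOf).toFinset : Finset ℕ) = {minOf F} := by simp
      rw [this, schreierOne, Set.mem_setOf_eq, minOf_singleton]
      simp
      omega
    · have hcardeq : (F.card : Ordinal) = Order.succ o :=
        _root_.le_antisymm hcard (Order.succ_le_of_lt (lt_of_not_ge hle))
      set m := minOf F with hm
      have hmF : m ∈ F := minOf_mem hFne
      by_cases hF1 : F.card = 1
      · -- F is a singleton {m}, and o = 0
        obtain ⟨a, ha⟩ := Finset.card_eq_one.mp hF1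
        have hma : m = a := by rw [hm, ha, minOf_singleton]
        have ho0 : o = 0 := by
          have h1 : ((1 : ℕ) : Ordinal) = Order.succ o := by rw [← hF1]; exact hcardeq
          have h2 : Order.succ (0 : Ordinal) = Order.succ o := by
            rw [← h1]; simp
          apply _root_.le_antisymm _ (zero_le : 0 ≤ o)
          exact Order.succ_le_succ_iff.mp (le_of_eq h2.symm)
        subst ho0
        rw [schreier_succ, schreier_zero]
        refine ⟨[F], ⟨by simpa using hFne, List.isChain_singleton F, ?_⟩,
          by simp [schreierZero, ha], by simp⟩
        have : (([F].map minOf).toFinset : Finset ℕ) = {minOf F} := by simp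
        rw [this, schreierOne, Set.mem_setOf_eq, minOf_singleton]
        simp
        omega
      · -- F has at least 2 elements; split off the minimum
        have hcard2 : 2 ≤ F.card := by
          have := Finset.card_pos.mpr hFne; omega
        set F' := F.erase m with hF'
        have hcardF' : F'.card = F.card - 1 := Finset.card_erase_of_mem hmF
        have hF'ne : F'.Nonempty := Finset.card_pos.mp (by omega)
        have hltF' : ∀ b ∈ F', m < b := by
          intro b hb
          have hbF := Finset.mem_of_mem_erase hb
          exact lt_of_le_of_ne (minOf_le hbF) (Ne.symm (Finset.ne_of_mem_erase hb))
        have hminF' : 2 ≤ minOf F' := le_trans hmin2 (le_of_lt (hltF' _ (minOf_mem hF'ne)))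
        have hcF' : (F'.card : Ordinal) ≤ o := by
          have h1 : F.card = F'.card + 1 := by omega
          rw [h1] at hcardeq
          have h2 : ((F'.card + 1 : ℕ) : Ordinal) = Order.succ (F'.card : Ordinal) := by
            push_cast; rw [Ordinal.add_one_eq_succ]
          rw [h2] at hcardeq
          exact Order.succ_le_succ_iff.mp (le_of_eq hcardeq)
        have ho1 : (1 : Ordinal) ≤ o := by
          have h2 : ((2 : ℕ) : Ordinal) ≤ Order.succ o := by
            rw [← hcardeq]; exact_mod_cast hcard2
          have h3 : ((2 : ℕ) : Ordinal) = Order.succ 1 := by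
            rw [show ((2:ℕ):Ordinal) = (1:Ordinal) + 1 by norm_num,
              Ordinal.add_one_eq_succ]
          rw [h3] at h2
          exact Order.succ_le_succ_iff.mp h2
        have hsm : ({m} : Finset ℕ) ∈ schreier seq o := by
          refine ih hc' {m} ⟨m, Finset.mem_singleton_self m⟩ ?_ ?_
          · rw [minOf_singleton]; exact hmin2
          · simpa using ho1
        have hsF' : F' ∈ schreier seq o := ih hc' F' hF'ne hminF' hcF'
        rw [schreier_succ]
        refine ⟨[{m}, F'], ⟨?_, ?_, ?_⟩, ?_, ?_⟩
        · intro E hE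
          rcases List.mem_cons.mp hE with rfl | hE
          · exact ⟨m, Finset.mem_singleton_self m⟩
          · have : E = F' := by simpa using hE
            rw [this]; exact hF'ne
        · rw [List.Chain', List.isChain_cons_cons]
          refine ⟨?_, List.isChain_singleton F'⟩
          intro a ha b hb
          rw [Finset.mem_singleton] at ha
          subst ha
          exact hltF' b hb
        · have heq : (([{m}, F'].map minOf).toFinset : Finset ℕ) = {m, minOf F'} := by
            simp [minOf_singleton]
          rw [heq, schreierOne, Set.mem_setOf_eq]
          have h2min : 2 ≤ minOf ({m, minOf F'} : Finset ℕ) := by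
            have hmm : minOf ({m, minOf F'} : Finset ℕ) ∈ ({m, minOf F'} : Finset ℕ) :=
              minOf_mem ⟨m, by simp⟩
            rcases Finset.mem_insert.mp hmm with h | h
            · omega
            · rw [Finset.mem_singleton] at h; omega
          exact le_trans (le_trans (Finset.card_insert_le _ _) (by simp)) h2min
        · intro E hE
          rcases List.mem_cons.mp hE with rfl | hE
          · exact hsm
          · have : E = F' := by simpa using hE
            rw [this]; exact hsF'
        · rw [show [({m} : Finset ℕ), F'].foldr (· ∪ ·) ∅ = {m} ∪ (F' ∪ ∅) from rfl,
            Finset.union_empty, ← Finset.insert_eq, hF', Finset.insert_erase hmF]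
  | limit o ho ih =>
    intro hc F hFne hmin2 hcard
    obtain ⟨hmono, hlt, _⟩ := hseq o hc ho
    rw [schreier_limit ho]
    refine ⟨F.card, le_refl _, hlt F.card, ?_⟩
    exact ih _ (hlt F.card) (le_trans (Ordinal.card_le_card (hlt F.card).le) hc) F hFne hmin2
      (nat_le_strictMono hmono F.card)

lemma spreading_schreier : ∀ {o : Ordinal}, Spreading (schreier seq o) := by
  intro o
  induction o using Ordinal.limitRecOn with
  | zero => rw [schreier_zero]; exact spreading_schreierZero
  | add_one o ih => rw [Ordinal.add_one_eq_succ]; rw [schreier_succ]; exact spreading_famComp spreading_schreierOne ih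
  | limit o ho ih =>
    rw [schreier_limit ho]
    rintro A ⟨n, hn, h, hmem⟩ g hg hge
    refine ⟨n, ?_, h, ih _ h A hmem g hg hge⟩
    rw [Finset.card_image_of_injOn hg.injOn]
    exact hn

lemma hereditary_schreier (hseq : IsCtblLadder seq) : ∀ {o : Ordinal},
    o.card ≤ Cardinal.aleph0 → Hereditary (schreier seq o) := by
  intro o
  induction o using Ordinal.limitRecOn with
  | zero => intro _; rw [schreier_zero]; exact hereditary_schreierZero
  | add_one o ih =>
    rw [Ordinal.add_one_eq_succ]
    intro hc
    rw [schreier_succ]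
    exact hereditary_famComp hereditary_schreierOne spreading_schreierOne
      (ih (le_trans (Ordinal.card_le_card (Order.le_succ o)) hc))
  | limit o ho ih =>
    intro hc A hA B hB
    obtain ⟨hmono, hlt, _⟩ := hseq o hc ho
    have hcsub : ∀ k : ℕ, (seq o k).card ≤ Cardinal.aleph0 := fun k =>
      le_trans (Ordinal.card_le_card (hlt k).le) hc
    rw [schreier_limit ho] at hA ⊢
    obtain ⟨n, hn, h, hAmem⟩ := hA
    have hBmem : B ∈ schreier seq (seq o n) := ih _ h (hcsub n) A hAmem B hB
    by_cases hcase : n ≤ B.card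
    · exact ⟨n, hcase, h, hBmem⟩
    rcases B.eq_empty_or_nonempty with rfl | hBne
    · exact ⟨0, by simp, hlt 0, empty_mem_schreier hseq (hcsub 0)⟩
    by_cases h0 : 0 ∈ B
    · exfalso
      have hA0 := schreier_eq_zero_singleton hAmem (hB h0)
      have hBA : B = A := by
        rw [hA0]
        exact Finset.eq_singleton_iff_unique_mem.mpr
          ⟨h0, fun b hb => Finset.mem_singleton.mp (hA0 ▸ hB hb)⟩
      rw [hBA] at hcase
      exact hcase hn
    by_cases h1 : 1 ∈ B
    · exfalso
      have hA1 := schreier_one_singleton hAmem (hB h1)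
      have hBA : B = A := by
        rw [hA1]
        exact Finset.eq_singleton_iff_unique_mem.mpr
          ⟨h1, fun b hb => Finset.mem_singleton.mp (hA1 ▸ hB hb)⟩
      rw [hBA] at hcase
      exact hcase hn
    have hmin2 : 2 ≤ minOf B := by
      have hmm : minOf B ∈ B := minOf_mem hBne
      rcases Nat.lt_or_ge (minOf B) 2 with hlt2 | hge2
      · interval_cases h : minOf B
        · exact absurd (h ▸ hmm) h0
        · exact absurd (h ▸ hmm) h1
      · exact hge2
    exact ⟨B.card, le_refl _, hlt B.card,
      schreier_mem_of_small hseq (hcsub B.card) B hBne hmin2 (nat_le_strictMono hmono B.card)⟩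

lemma hereditary_famF {Sa Sadm : Set (Finset ℕ)} (hSa : Hereditary Sa)
    (hh : Hereditary Sadm) (hs : Spreading Sadm) : ∀ i, Hereditary (famF Sa Sadm i)
  | 0 => hSa
  | i + 1 => hereditary_famComp hh hs (hereditary_famF hSa hh hs i)

lemma empty_mem_famF {Sa Sadm : Set (Finset ℕ)} (ha : ∅ ∈ Sa) (hM : ∅ ∈ Sadm) :
    ∀ i, ∅ ∈ famF Sa Sadm i
  | 0 => ha
  | _ + 1 => empty_mem_famComp hM

lemma hereditary_famG {Sadm : Set (Finset ℕ)} (hh : Hereditary Sadm) (hs : Spreading Sadm) :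
    ∀ n, Hereditary (famG Sadm n)
  | 0 => hh
  | n + 1 => hereditary_famComp hh hs (hereditary_famG hh hs n)

lemma spreading_famG {Sadm : Set (Finset ℕ)} (hs : Spreading Sadm) :
    ∀ n, Spreading (famG Sadm n)
  | 0 => hs
  | n + 1 => spreading_famComp hs (spreading_famG hs n)

lemma empty_mem_famG {Sadm : Set (Finset ℕ)} (hM : ∅ ∈ Sadm) : ∀ n, ∅ ∈ famG Sadm n
  | 0 => hM
  | _ + 1 => empty_mem_famComp hM

end PartD

section PartE
open List

lemma pairwise_finLT_of_forall₂ {l Gs : List (Finset ℕ)}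
    (hsub : List.Forall₂ (· ⊆ ·) Gs l) (hpl : l.Pairwise finLT) : Gs.Pairwise finLT := by
  have hlen : Gs.length = l.length := hsub.length_eq
  have hsub' : ∀ (i : ℕ) (h1 : i < Gs.length) (h2 : i < l.length), Gs[i] ⊆ l[i] := by
    have := List.forall₂_iff_get.mp hsub
    intro i h1 h2; exact this.2 i h1 h2
  rw [List.pairwise_iff_getElem] at hpl ⊢
  intro i j hi hj hij
  exact finLT_mono (hsub' i hi (hlen ▸ hi)) (hsub' j hj (hlen ▸ hj))
    (hpl i j (hlen ▸ hi) (hlen ▸ hj) hij)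

lemma forall₂_choice {f : Finset ℕ → Set ℝ} : ∀ {l : List (Finset ℕ)},
    (∀ E ∈ l, (f E).Nonempty) → ∃ rl : List ℝ, List.Forall₂ (fun r E => r ∈ f E) rl l := by
  intro l
  induction l with
  | nil => exact fun _ => ⟨[], List.Forall₂.nil⟩
  | cons E t ih =>
    intro h
    obtain ⟨rl, hrl⟩ := ih (fun E' hE' => h E' (List.mem_cons_of_mem _ hE'))
    obtain ⟨r, hr⟩ := h E (List.mem_cons_self)
    exact ⟨r :: rl, List.Forall₂.cons hr hrl⟩

lemma forall₂_mem_right {α β : Type*} {R : α → β → Prop} :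
    ∀ {l1 : List α} {l2 : List β}, List.Forall₂ R l1 l2 → ∀ b ∈ l2, ∃ a ∈ l1, R a b := by
  intro l1 l2 h
  induction h with
  | nil => intro b hb; simp at hb
  | cons hr ht ih =>
    intro b hb
    rcases List.mem_cons.mp hb with rfl | hb
    · exact ⟨_, List.mem_cons_self, hr⟩
    · obtain ⟨a, ha, hab⟩ := ih b hb
      exact ⟨a, List.mem_cons_of_mem _ ha, hab⟩

lemma forall₂_mem_left {α β : Type*} {R : α → β → Prop} :
    ∀ {l1 : List α} {l2 : List β}, List.Forall₂ R l1 l2 → ∀ a ∈ l1, ∃ b ∈ l2, R a b := by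
  intro l1 l2 h
  induction h with
  | nil => intro a ha; simp at ha
  | cons hr ht ih =>
    intro a ha
    rcases List.mem_cons.mp ha with rfl | ha
    · exact ⟨_, List.mem_cons_self, hr⟩
    · obtain ⟨b, hb, hab⟩ := ih a ha
      exact ⟨b, List.mem_cons_of_mem _ hb, hab⟩

/-- Summing suprema over a list. -/
lemma list_sum_csSup_le {f : Finset ℕ → Set ℝ} : ∀ {l : List (Finset ℕ)} {C : ℝ},
    (∀ E ∈ l, (f E).Nonempty) → (∀ E ∈ l, ∀ r ∈ f E, 0 ≤ r) → 0 ≤ C →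
    (∀ rl : List ℝ, List.Forall₂ (fun r E => r ∈ f E) rl l → rl.sum ≤ C) →
    (l.map fun E => sSup (f E)).sum ≤ C := by
  intro l
  induction l with
  | nil => intro C _ _ hC _; simpa using hC
  | cons E t ih =>
    intro C hne hpos hC h
    simp only [List.map_cons, List.sum_cons]
    have hfE := hne E (List.mem_cons_self)
    have hkey : ∀ r ∈ f E, (t.map fun E' => sSup (f E')).sum ≤ C - r := by
      intro r hr
      have hne' : ∀ E' ∈ t, (f E').Nonempty := fun E' hE' => hne E' (List.mem_cons_of_mem _ hE')
      refine ih hne' (fun E' hE' => hpos E' (List.mem_cons_of_mem _ hE')) ?_ ?_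
      · obtain ⟨rl0, hrl0⟩ := forall₂_choice hne'
        have h1 := h (r :: rl0) (List.Forall₂.cons hr hrl0)
        simp only [List.sum_cons] at h1
        have h2 : 0 ≤ rl0.sum := by
          refine List.sum_nonneg ?_
          intro a ha
          obtain ⟨E', hE', haE'⟩ := forall₂_mem_left hrl0 a ha
          exact hpos E' (List.mem_cons_of_mem _ hE') a haE'
        linarith
      · intro rl hrl
        have h1 := h (r :: rl) (List.Forall₂.cons hr hrl)
        simp only [List.sum_cons] at h1
        linarith
    have hsup : sSup (f E) ≤ C - (t.map fun E' => sSup (f E')).sum := by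
      refine csSup_le hfE ?_
      intro r hr
      have := hkey r hr
      linarith
    linarith

variable {Sa Sadm : Set (Finset ℕ)}

lemma famNorm_nonneg (𝓕 : Set (Finset ℕ)) (x : ℕ →₀ ℝ) : 0 ≤ famNorm 𝓕 x := by
  refine Real.sSup_nonneg ?_
  rintro r ⟨F, _, rfl⟩
  exact sigmaF_nonneg F x

lemma famNorm_bddAbove (𝓕 : Set (Finset ℕ)) (x : ℕ →₀ ℝ) :
    BddAbove {r : ℝ | ∃ F ∈ 𝓕, r = sigmaF F x} := by
  refine ⟨sigmaF x.support x, ?_⟩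
  rintro r ⟨F, _, rfl⟩
  exact sigmaF_le_l1 F x

lemma famNorm_le_l1 (𝓕 : Set (Finset ℕ)) (x : ℕ →₀ ℝ) :
    famNorm 𝓕 x ≤ sigmaF x.support x := by
  refine Real.sSup_le ?_ (sigmaF_nonneg _ x)
  rintro r ⟨F, _, rfl⟩
  exact sigmaF_le_l1 F x

lemma sigmaF_le_famNorm {𝓕 : Set (Finset ℕ)} {F : Finset ℕ} (h : F ∈ 𝓕) (x : ℕ →₀ ℝ) :
    sigmaF F x ≤ famNorm 𝓕 x :=
  le_csSup (famNorm_bddAbove 𝓕 x) ⟨F, h, rfl⟩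

lemma l1_restr (E : Finset ℕ) (x : ℕ →₀ ℝ) :
    sigmaF (restr E x).support (restr E x) = sigmaF (x.support ∩ E) x := by
  have hsupp : (restr E x).support = x.support.filter (· ∈ E) := by
    rw [restr, Finsupp.support_filter]
  rw [hsupp, Finset.filter_mem_eq_inter, sigmaF_restr]
  congr 1
  rw [Finset.inter_assoc, Finset.inter_self]

lemma sum_l1_restr_le {l : List (Finset ℕ)} (hpd : l.Pairwise (fun E F => _root_.Disjoint E F))
    (x : ℕ →₀ ℝ) :
    (l.map fun E => sigmaF (restr E x).support (restr E x)).sum ≤ sigmaF x.support x := by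
  have h1 : (l.map fun E => sigmaF (restr E x).support (restr E x))
      = (l.map (x.support ∩ ·)).map (fun G => sigmaF G x) := by
    rw [List.map_map]
    exact List.map_congr_left fun E _ => l1_restr E x
  have hpd' : (l.map (x.support ∩ ·)).Pairwise (fun E F => _root_.Disjoint E F) := by
    rw [List.pairwise_map]
    exact hpd.imp fun h => h.mono Finset.inter_subset_right Finset.inter_subset_right
  rw [h1, sum_sigmaF_of_disjoint hpd' x]
  refine sigmaF_mono (foldr_union_subset ?_) x
  intro G hG
  obtain ⟨E, _, rfl⟩ := List.mem_map.mp hG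
  exact Finset.inter_subset_left

lemma normSeq_zero_eq (x : ℕ →₀ ℝ) : normSeq Sa Sadm 0 x = famNorm Sa x := rfl

lemma normSeq_succ_eq (n : ℕ) (x : ℕ →₀ ℝ) : normSeq Sa Sadm (n + 1) x =
    max (normSeq Sa Sadm n x)
      (sSup {r : ℝ | ∃ l : List (Finset ℕ), IsAdmissible Sadm l ∧
        r = (1 / 2) * ((l.map fun E => normSeq Sa Sadm n (restr E x)).sum)}) := rfl

lemma normSeq_nonneg : ∀ (n : ℕ) (x : ℕ →₀ ℝ), 0 ≤ normSeq Sa Sadm n x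
  | 0, x => famNorm_nonneg Sa x
  | n + 1, x => le_trans (normSeq_nonneg n x) (le_max_left _ _)

lemma normSeq_le_l1 : ∀ (n : ℕ) (x : ℕ →₀ ℝ), normSeq Sa Sadm n x ≤ sigmaF x.support x := by
  intro n
  induction n with
  | zero => exact fun x => famNorm_le_l1 Sa x
  | succ n ih =>
    intro x
    rw [normSeq_succ_eq]
    refine max_le (ih x) (Real.sSup_le ?_ (sigmaF_nonneg _ x))
    rintro r ⟨l, hadm, rfl⟩
    have hpd := pairwise_disjoint_of_finLT (pairwise_finLT hadm.1 hadm.2.1)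
    have h1 : (l.map fun E => normSeq Sa Sadm n (restr E x)).sum
        ≤ (l.map fun E => sigmaF (restr E x).support (restr E x)).sum :=
      List.sum_le_sum fun E _ => ih (restr E x)
    have h2 := sum_l1_restr_le hpd x
    have h3 : 0 ≤ sigmaF x.support x := sigmaF_nonneg _ x
    calc 1 / 2 * (l.map fun E => normSeq Sa Sadm n (restr E x)).sum
        ≤ 1 / 2 * sigmaF x.support x := by linarith
      _ ≤ sigmaF x.support x := by linarith

lemma tnorm_bddAbove (x : ℕ →₀ ℝ) : BddAbove (Set.range fun n => normSeq Sa Sadm n x) := by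
  refine ⟨sigmaF x.support x, ?_⟩
  rintro r ⟨n, rfl⟩
  exact normSeq_le_l1 n x

lemma normSeq_le_tnorm (n : ℕ) (x : ℕ →₀ ℝ) : normSeq Sa Sadm n x ≤ tnorm Sa Sadm x :=
  le_ciSup (tnorm_bddAbove x) n

lemma tnorm_nonneg (x : ℕ →₀ ℝ) : 0 ≤ tnorm Sa Sadm x :=
  le_trans (normSeq_nonneg 0 x) (normSeq_le_tnorm 0 x)

lemma tnorm_le_l1 (x : ℕ →₀ ℝ) : tnorm Sa Sadm x ≤ sigmaF x.support x :=
  ciSup_le fun n => normSeq_le_l1 n x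

lemma tnorm_zero : tnorm Sa Sadm 0 = 0 := by
  refine _root_.le_antisymm ?_ (tnorm_nonneg 0)
  have := tnorm_le_l1 (Sa := Sa) (Sadm := Sadm) 0
  simpa [sigmaF] using this

/-- The set of sums `∑ ‖E_i x‖` over `K`-admissible collections. -/
def tsumSet (Sa Sadm K : Set (Finset ℕ)) (x : ℕ →₀ ℝ) : Set ℝ :=
  {r : ℝ | ∃ l : List (Finset ℕ), IsAdmissible K l ∧
    r = (l.map fun E => tnorm Sa Sadm (restr E x)).sum}

lemma tsumSet_nonneg {K : Set (Finset ℕ)} {x : ℕ →₀ ℝ} :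
    ∀ r ∈ tsumSet Sa Sadm K x, 0 ≤ r := by
  rintro r ⟨l, hadm, rfl⟩
  refine List.sum_nonneg ?_
  intro a ha
  obtain ⟨E, _, rfl⟩ := List.mem_map.mp ha
  exact tnorm_nonneg _

lemma sum_tnorm_le_l1 {l : List (Finset ℕ)} (hne : ∀ E ∈ l, E.Nonempty)
    (hch : l.Chain' finLT) (x : ℕ →₀ ℝ) :
    (l.map fun E => tnorm Sa Sadm (restr E x)).sum ≤ sigmaF x.support x := by
  have hpd := pairwise_disjoint_of_finLT (pairwise_finLT hne hch)
  refine le_trans (List.sum_le_sum fun E _ => tnorm_le_l1 (restr E x)) (sum_l1_restr_le hpd x)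

lemma tsumSet_bddAbove {K : Set (Finset ℕ)} {x : ℕ →₀ ℝ} :
    BddAbove (tsumSet Sa Sadm K x) := by
  refine ⟨sigmaF x.support x, ?_⟩
  rintro r ⟨l, hadm, rfl⟩
  exact sum_tnorm_le_l1 hadm.1 hadm.2.1 x

lemma sSup_tsumSet_nonneg {K : Set (Finset ℕ)} {x : ℕ →₀ ℝ} :
    0 ≤ sSup (tsumSet Sa Sadm K x) :=
  Real.sSup_nonneg tsumSet_nonneg

/-- Base case: the `T̈`-norm is controlled by `ρ₀` and the first sup. -/
lemma tnorm_base (x : ℕ →₀ ℝ) :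
    tnorm Sa Sadm x ≤ famNorm Sa x + (1 / 2) * sSup (tsumSet Sa Sadm Sadm x) := by
  refine ciSup_le ?_
  intro m
  induction m with
  | zero =>
    rw [normSeq_zero_eq]
    have h1 : 0 ≤ (1 / 2 : ℝ) * sSup (tsumSet Sa Sadm Sadm x) := by
      have := sSup_tsumSet_nonneg (Sa := Sa) (Sadm := Sadm) (K := Sadm) (x := x)
      linarith
    linarith
  | succ m ih =>
    rw [normSeq_succ_eq]
    refine max_le ih ?_
    have hfam := famNorm_nonneg Sa x
    have hsup : sSup {r : ℝ | ∃ l : List (Finset ℕ), IsAdmissible Sadm l ∧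
        r = (1 / 2) * ((l.map fun E => normSeq Sa Sadm m (restr E x)).sum)}
        ≤ (1 / 2) * sSup (tsumSet Sa Sadm Sadm x) := by
      refine Real.sSup_le ?_ ?_
      · rintro r ⟨l, hadm, rfl⟩
        have h1 : (l.map fun E => normSeq Sa Sadm m (restr E x)).sum
            ≤ (l.map fun E => tnorm Sa Sadm (restr E x)).sum :=
          List.sum_le_sum fun E _ => normSeq_le_tnorm m (restr E x)
        have h2 : (l.map fun E => tnorm Sa Sadm (restr E x)).sum
            ≤ sSup (tsumSet Sa Sadm Sadm x) :=
          le_csSup tsumSet_bddAbove ⟨l, hadm, rfl⟩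
        linarith
      · have := sSup_tsumSet_nonneg (Sa := Sa) (Sadm := Sadm) (K := Sadm) (x := x)
        linarith
    linarith

lemma sum_map_filter_ne {f : Finset ℕ → ℝ} (hf : f ∅ = 0) :
    ∀ Gs : List (Finset ℕ),
      (Gs.map f).sum = ((Gs.filter fun G => G.Nonempty).map f).sum := by
  intro Gs
  induction Gs with
  | nil => simp
  | cons G t ih =>
    by_cases h : G.Nonempty
    · simp [List.filter_cons, h, ih]
    · have : G = ∅ := Finset.not_nonempty_iff_eq_empty.mp h
      simp [List.filter_cons, h, ih, this, hf]

lemma foldr_union_filter_ne (Gs : List (Finset ℕ)) :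
    ((Gs.filter fun G => G.Nonempty).foldr (· ∪ ·) ∅) = Gs.foldr (· ∪ ·) ∅ := by
  ext n
  rw [mem_foldr_union, mem_foldr_union]
  constructor
  · rintro ⟨G, hG, hnG⟩
    exact ⟨G, (List.mem_filter.mp hG).1, hnG⟩
  · rintro ⟨G, hG, hnG⟩
    exact ⟨G, List.mem_filter.mpr ⟨hG, by simp; exact ⟨n, hnG⟩⟩, hnG⟩

lemma toFinset_flatten (ll : List (List ℕ)) :
    (ll.flatten).toFinset = (ll.map List.toFinset).foldr (· ∪ ·) ∅ := by
  induction ll with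
  | nil => simp
  | cons d t ih => simp [List.toFinset_append, ih]

/-- Combination lemma (a): summing `famNorm N` over an `M`-admissible collection. -/
lemma sum_famNorm_le {M N : Set (Finset ℕ)} (hN_h : Hereditary N) (hN0 : ∅ ∈ N)
    (hM_h : Hereditary M) (hM_s : Spreading M) {l : List (Finset ℕ)}
    (hl : IsAdmissible M l) (x : ℕ →₀ ℝ) :
    (l.map fun E => famNorm N (restr E x)).sum ≤ famNorm (famComp M N) x := by
  have hC : 0 ≤ famNorm (famComp M N) x := famNorm_nonneg _ x
  refine list_sum_csSup_le (f := fun E => {r : ℝ | ∃ F ∈ N, r = sigmaF F (restr E x)})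
    ?_ ?_ hC ?_
  · exact fun E _ => ⟨_, ∅, hN0, rfl⟩
  · rintro E _ r ⟨F, _, rfl⟩
    exact sigmaF_nonneg _ _
  · intro rl hrl
    have hext : ∃ Gs : List (Finset ℕ), List.Forall₂ (fun G E => G ⊆ E ∧ G ∈ N) Gs l ∧
        rl = Gs.map (fun G => sigmaF G x) := by
      clear hl
      induction hrl with
      | nil => exact ⟨[], List.Forall₂.nil, rfl⟩
      | @cons r E rl' l' hr ht ih =>
        obtain ⟨Gs, h1, h2⟩ := ih
        obtain ⟨F, hF, rfl⟩ := hr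
        refine ⟨(F ∩ E) :: Gs, List.Forall₂.cons
          ⟨Finset.inter_subset_right, hN_h F hF _ Finset.inter_subset_left⟩ h1, ?_⟩
        simp only [List.map_cons, ← h2, sigmaF_restr]
    obtain ⟨Gs, hGs, rfl⟩ := hext
    have hsub2 : List.Forall₂ (· ⊆ ·) Gs l := List.Forall₂.imp (fun a b h => h.1) hGs
    have hadm' := isAdmissible_shrink hM_h hM_s hl hsub2
    have hdisj : (Gs.filter fun G => G.Nonempty).Pairwise (fun E F => _root_.Disjoint E F) :=
      (pairwise_disjoint_of_finLT
        (pairwise_finLT_of_forall₂ hsub2 (pairwise_finLT hl.1 hl.2.1))).filter _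
    rw [sum_map_filter_ne (f := fun G => sigmaF G x) (by simp [sigmaF]) Gs,
      sum_sigmaF_of_disjoint hdisj x]
    refine sigmaF_le_famNorm ?_ x
    refine ⟨Gs.filter (fun G => G.Nonempty), hadm', ?_, rfl⟩
    intro G hG
    obtain ⟨E, _, hGE⟩ := forall₂_mem_left hGs G (List.mem_filter.mp hG).1
    exact hGE.2

/-- Combination lemma (b): summing the sups `sSup (tsumSet K)` over an
`M`-admissible collection. -/
lemma sum_tsumSet_le {M K : Set (Finset ℕ)} (hK_h : Hereditary K) (hK_s : Spreading K)
    (hK0 : ∅ ∈ K) (hM_h : Hereditary M) (hM_s : Spreading M)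
    {l : List (Finset ℕ)} (hl : IsAdmissible M l) (x : ℕ →₀ ℝ) :
    (l.map fun E => sSup (tsumSet Sa Sadm K (restr E x))).sum
      ≤ sSup (tsumSet Sa Sadm (famComp M K) x) := by
  refine list_sum_csSup_le ?_ ?_ sSup_tsumSet_nonneg ?_
  · exact fun E _ => ⟨0, [], isAdmissible_nil hK0, by simp⟩
  · exact fun E _ => tsumSet_nonneg
  · intro rl hrl
    have hext : ∃ ds : List (List (Finset ℕ)),
        List.Forall₂ (fun d E => IsAdmissible K d ∧ ∀ D ∈ d, D ⊆ E) ds l ∧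
        rl.sum = ((ds.flatten).map fun D => tnorm Sa Sadm (restr D x)).sum := by
      clear hl
      induction hrl with
      | nil => exact ⟨[], List.Forall₂.nil, by simp⟩
      | @cons r E rl' l' hr ht ih =>
        obtain ⟨ds, h1, h2⟩ := ih
        obtain ⟨d, hdadm, rfl⟩ := hr
        have hsubd : List.Forall₂ (· ⊆ ·) (d.map (· ∩ E)) d := by
          rw [List.forall₂_iff_get]
          refine ⟨by simp, ?_⟩
          intro i ha hb
          simp only [List.get_eq_getElem, List.getElem_map]
          exact Finset.inter_subset_left
        have hadm' := isAdmissible_shrink hK_h hK_s hdadm hsubd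
        set d' := (d.map (· ∩ E)).filter (fun G => G.Nonempty) with hd'
        have hsubE : ∀ D ∈ d', D ⊆ E := by
          intro D hD
          obtain ⟨D₀, _, rfl⟩ := List.mem_map.mp (List.mem_filter.mp hD).1
          exact Finset.inter_subset_right
        have hval : (d.map fun D => tnorm Sa Sadm (restr D (restr E x))).sum
            = (d'.map fun D => tnorm Sa Sadm (restr D x)).sum := by
          have s1 : (d.map fun D => tnorm Sa Sadm (restr D (restr E x)))
              = (d.map (· ∩ E)).map (fun G => tnorm Sa Sadm (restr G x)) := by
            rw [List.map_map]
            exact List.map_congr_left fun D _ => by rw [Function.comp_apply, restr_restr]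
          rw [s1, hd',
            sum_map_filter_ne (f := fun G => tnorm Sa Sadm (restr G x))
              (by show tnorm Sa Sadm (restr ∅ x) = 0; rw [restr_empty, tnorm_zero])
              (d.map (· ∩ E))]
        refine ⟨d' :: ds, List.Forall₂.cons ⟨hadm', hsubE⟩ h1, ?_⟩
        simp only [List.sum_cons, List.flatten_cons, List.map_append, List.sum_append, h2, hval]
    obtain ⟨ds, hds, hsum⟩ := hext
    rw [hsum]
    refine le_csSup tsumSet_bddAbove ⟨ds.flatten, ?_, rfl⟩
    -- admissibility of the flattened list for `famComp M K`
    have hpl : l.Pairwise finLT := pairwise_finLT hl.1 hl.2.1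
    have hlen : ds.length = l.length := hds.length_eq
    have hrel : ∀ (i : ℕ) (h1 : i < ds.length) (h2 : i < l.length),
        IsAdmissible K ds[i] ∧ ∀ D ∈ ds[i], D ⊆ l[i] := by
      have := List.forall₂_iff_get.mp hds
      intro i h1 h2; exact this.2 i h1 h2
    refine ⟨?_, ?_, ?_⟩
    · intro D hD
      obtain ⟨d, hd, hDd⟩ := List.mem_flatten.mp hD
      obtain ⟨E, _, hrel'⟩ := forall₂_mem_left hds d hd
      exact hrel'.1.1 D hDd
    · refine List.Pairwise.isChain ?_
      rw [List.pairwise_flatten]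
      constructor
      · intro d hd
        obtain ⟨E, _, hrel'⟩ := forall₂_mem_left hds d hd
        exact pairwise_finLT hrel'.1.1 hrel'.1.2.1
      · rw [List.pairwise_iff_getElem]
        intro i j hi hj hij D hD D' hD'
        have h1 := (hrel i hi (hlen ▸ hi)).2 D hD
        have h2 := (hrel j hj (hlen ▸ hj)).2 D' hD'
        exact finLT_mono h1 h2
          (List.pairwise_iff_getElem.mp hpl i j (hlen ▸ hi) (hlen ▸ hj) hij)
    · -- the min-set belongs to famComp M K
      set Ms : List (Finset ℕ) := ds.map (fun d => (d.map minOf).toFinset) with hMs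
      have heqmin : ((ds.flatten).map minOf).toFinset = Ms.foldr (· ∪ ·) ∅ := by
        rw [List.map_flatten, toFinset_flatten, List.map_map, hMs]
        rfl
      have hsubMs : List.Forall₂ (· ⊆ ·) Ms l := by
        rw [List.forall₂_iff_get]
        refine ⟨by simp [hMs, hlen], ?_⟩
        intro i h1 h2
        simp only [hMs, List.get_eq_getElem, List.getElem_map]
        intro m hm
        rw [List.mem_toFinset, List.mem_map] at hm
        obtain ⟨D, hD, rfl⟩ := hm
        have h3 : i < ds.length := by simp [hMs] at h1; omega
        exact (hrel i h3 h2).2 D hD ((hrel i h3 h2).1.1 D hD |> minOf_mem)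
      have hadmMs := isAdmissible_shrink hM_h hM_s hl hsubMs
      refine ⟨Ms.filter (fun G => G.Nonempty), hadmMs, ?_, ?_⟩
      · intro G hG
        obtain ⟨d, hd, rfl⟩ := List.mem_map.mp (List.mem_filter.mp hG).1
        obtain ⟨E, _, hrel'⟩ := forall₂_mem_left hds d hd
        exact hrel'.1.2.2
      · rw [heqmin, foldr_union_filter_ne]

lemma list_sum_map_add {α : Type*} (l : List α) (f g : α → ℝ) :
    (l.map fun E => f E + g E).sum = (l.map f).sum + (l.map g).sum := by
  induction l with
  | nil => simp
  | cons a t ih => simp [ih]; ring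

lemma list_sum_map_mul_left {α : Type*} (l : List α) (c : ℝ) (f : α → ℝ) :
    (l.map fun E => c * f E).sum = c * (l.map f).sum := by
  induction l with
  | nil => simp
  | cons a t ih => simp [ih]; ring

lemma list_sum_map_div {α : Type*} (l : List α) (c : ℝ) (f : α → ℝ) :
    (l.map fun E => f E / c).sum = (l.map f).sum / c := by
  induction l with
  | nil => simp
  | cons a t ih => simp [ih]; ring

lemma list_sum_comm {α : Type*} (l : List α) (s : Finset ℕ) (g : ℕ → α → ℝ) :
    (l.map fun E => ∑ i ∈ s, g i E).sum = ∑ i ∈ s, (l.map fun E => g i E).sum := by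
  induction l with
  | nil => simp
  | cons a t ih => simp [ih, Finset.sum_add_distrib]

end PartE

/-- Proposition 5 of the paper: for all `a ∈ c₀₀` and `n ≥ 0`,
`‖a‖_{T̈} ≤ ∑_{i=0}^n ρ′_i(a)/2^i + 2^{-(n+1)} sup{∑ ‖E_i a‖_{T̈}}`, the supremum
being over all `𝓖′_{n+1}`-admissible collections `{E₁, …, E_j}`.
(Here `famG (sqFam Sβ) n = 𝓖′_{n+1}` and `famF Sα (sqFam Sβ) i = 𝓕′_i`.) -/
theorem statement5 (seq : Ordinal → ℕ → Ordinal) (hseq : IsCtblLadder seq)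
    (a b : Ordinal) (ha : a.card ≤ Cardinal.aleph0) (hb : b.card ≤ Cardinal.aleph0)
    (hb0 : b ≠ 0) (x : ℕ →₀ ℝ) (n : ℕ) :
    tnorm (schreier seq a) (sqFam (schreier seq b)) x ≤
      (∑ i ∈ Finset.range (n + 1),
        famNorm (famF (schreier seq a) (sqFam (schreier seq b)) i) x / 2 ^ i) +
      (1 / 2 ^ (n + 1)) *
        sSup {r : ℝ | ∃ l : List (Finset ℕ),
          IsAdmissible (famG (sqFam (schreier seq b)) n) l ∧
          r = (l.map fun E =>
            tnorm (schreier seq a) (sqFam (schreier seq b)) (restr E x)).sum} := by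
  set Sa : Set (Finset ℕ) := schreier seq a with hSa
  set sq : Set (Finset ℕ) := sqFam (schreier seq b) with hsq
  have hSa_h : Hereditary Sa := hereditary_schreier hseq ha
  have hSa0 : ∅ ∈ Sa := empty_mem_schreier hseq ha
  have hsq_h : Hereditary sq := hereditary_sqFam (hereditary_schreier hseq hb)
  have hsq_s : Spreading sq := spreading_sqFam spreading_schreier
  have hsq0 : ∅ ∈ sq := empty_mem_sqFam (empty_mem_schreier hseq hb)
  show tnorm Sa sq x ≤
      (∑ i ∈ Finset.range (n + 1), famNorm (famF Sa sq i) x / 2 ^ i) +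
      (1 / 2 ^ (n + 1)) * sSup (tsumSet Sa sq (famG sq n) x)
  induction n generalizing x with
  | zero =>
    refine le_trans (tnorm_base (Sa := Sa) (Sadm := sq) x) (le_of_eq ?_)
    rw [show (0:ℕ) + 1 = 1 from rfl, Finset.sum_range_one]
    show famNorm Sa x + 1 / 2 * sSup (tsumSet Sa sq sq x)
      = famNorm Sa x / 2 ^ 0 + 1 / 2 ^ 1 * sSup (tsumSet Sa sq sq x)
    norm_num
  | succ n ih =>
    have hbase := tnorm_base (Sa := Sa) (Sadm := sq) x
    set S' : ℝ := sSup (tsumSet Sa sq (famG sq (n + 1)) x) with hS'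
    have hS'nn : 0 ≤ S' := sSup_tsumSet_nonneg
    have hBnn : ∀ i, 0 ≤ famNorm (famF Sa sq i) x := fun i => famNorm_nonneg _ x
    -- bound the level-0 sup by the shifted quantities
    have hsupb : sSup (tsumSet Sa sq sq x) ≤
        (∑ i ∈ Finset.range (n + 1), famNorm (famF Sa sq (i + 1)) x / 2 ^ i) +
        (1 / 2 ^ (n + 1)) * S' := by
      refine Real.sSup_le ?_ ?_
      · rintro r ⟨l, hadm, rfl⟩
        have h1 : (l.map fun E => tnorm Sa sq (restr E x)).sum ≤
            (l.map fun E =>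
              (∑ i ∈ Finset.range (n + 1), famNorm (famF Sa sq i) (restr E x) / 2 ^ i) +
              (1 / 2 ^ (n + 1)) * sSup (tsumSet Sa sq (famG sq n) (restr E x))).sum :=
          List.sum_le_sum fun E _ => ih (restr E x)
        rw [list_sum_map_add, list_sum_comm, list_sum_map_mul_left] at h1
        have h2 : ∀ i ∈ Finset.range (n + 1),
            (l.map fun E => famNorm (famF Sa sq i) (restr E x) / 2 ^ i).sum ≤
            famNorm (famF Sa sq (i + 1)) x / 2 ^ i := by
          intro i _
          rw [list_sum_map_div]
          have h3 : (l.map fun E => famNorm (famF Sa sq i) (restr E x)).sum ≤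
              famNorm (famF Sa sq (i + 1)) x := by
            have := sum_famNorm_le (M := sq) (N := famF Sa sq i)
              (hereditary_famF hSa_h hsq_h hsq_s i) (empty_mem_famF hSa0 hsq0 i)
              hsq_h hsq_s hadm x
            exact this
          gcongr
        have h4 : (l.map fun E => sSup (tsumSet Sa sq (famG sq n) (restr E x))).sum ≤ S' := by
          have := sum_tsumSet_le (Sa := Sa) (Sadm := sq) (M := sq) (K := famG sq n)
            (hereditary_famG hsq_h hsq_s n) (spreading_famG hsq_s n)
            (empty_mem_famG hsq0 n) hsq_h hsq_s hadm x
          exact this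
        have h5 := Finset.sum_le_sum h2
        have h6 : (1 / 2 ^ (n + 1) : ℝ) * (l.map fun E =>
            sSup (tsumSet Sa sq (famG sq n) (restr E x))).sum ≤ (1 / 2 ^ (n + 1)) * S' := by
          have hpos : (0:ℝ) ≤ 1 / 2 ^ (n + 1) := by positivity
          exact mul_le_mul_of_nonneg_left h4 hpos
        linarith
      · have : (0:ℝ) ≤ ∑ i ∈ Finset.range (n + 1), famNorm (famF Sa sq (i + 1)) x / 2 ^ i := by
          refine Finset.sum_nonneg fun i _ => ?_
          have := hBnn (i + 1); positivity
        have hpos : (0:ℝ) ≤ (1 / 2 ^ (n + 1)) * S' := by positivity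
        linarith
    have hhalf : (0:ℝ) ≤ 1 / 2 := by norm_num
    have hmain : tnorm Sa sq x ≤ famNorm Sa x + (1 / 2) *
        ((∑ i ∈ Finset.range (n + 1), famNorm (famF Sa sq (i + 1)) x / 2 ^ i) +
          (1 / 2 ^ (n + 1)) * S') :=
      le_trans hbase (by nlinarith [mul_le_mul_of_nonneg_left hsupb hhalf])
    refine le_trans hmain (le_of_eq ?_)
    rw [Finset.sum_range_succ' (fun i => famNorm (famF Sa sq i) x / 2 ^ i) (n + 1)]
    have hsum : (1/2 : ℝ) * ∑ i ∈ Finset.range (n + 1), famNorm (famF Sa sq (i + 1)) x / 2 ^ i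
        = ∑ i ∈ Finset.range (n + 1), famNorm (famF Sa sq (i + 1)) x / 2 ^ (i + 1) := by
      rw [Finset.mul_sum]
      refine Finset.sum_congr rfl fun i _ => ?_
      rw [pow_succ]
      ring
    have hfam0 : famNorm (famF Sa sq 0) x = famNorm Sa x := rfl
    rw [mul_add, hsum, hfam0]
    rw [show ((1:ℝ)/2) * ((1 / 2 ^ (n + 1)) * S') = (1 / 2 ^ (n + 1 + 1)) * S' by
      rw [pow_succ]; ring]
    ring

end LTIndex
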